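/- Let ℓ ≥ 3 be an integer and k a field. Define the field K = k(y, y₁, z) with the single relation zℓ·(y₁² + y₁) = y² + y (i.e. K is the fraction field of k[y, y₁, z]/(zℓ(y₁²+y₁) - y² - y), assuming this is an integral domain). Then K is a purely transcendental extension of k of transcendence degree 2; equivalently, the surface defined by zℓ(y₁²+y₁) = y²+y is rational. -/

import Mathlib

open MvPolynomial Polynomial

theorem aux_finSucc (k : Type*) [Field k] (p : MvPolynomial (Fin 2) k) :
    (MvPolynomial.finSuccEquiv k 2) (aeval (![X 2, X 1] : Fin 2 → MvPolynomial (Fin 3) k) p)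
      = Polynomial.C (aeval (![X 1, X 0] : Fin 2 → MvPolynomial (Fin 2) k) p) := by
  have h : ((MvPolynomial.finSuccEquiv k 2 : MvPolynomial (Fin 3) k →ₐ[k] Polynomial (MvPolynomial (Fin 2) k)).comp (aeval ![X 2, X 1]))
      = (Polynomial.CAlgHom.comp (aeval ![X 1, X 0]) : MvPolynomial (Fin 2) k →ₐ[k] Polynomial (MvPolynomial (Fin 2) k)) := by
    apply MvPolynomial.algHom_ext
    intro i
    fin_cases i <;>
      simp only [AlgHom.comp_apply, MvPolynomial.aeval_X, Fin.zero_eta, Fin.mk_one,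
        Matrix.cons_val_zero, Matrix.cons_val_one, Matrix.head_cons, AlgHom.coe_coe,
        Polynomial.CAlgHom_apply]
    · exact MvPolynomial.finSuccEquiv_X_succ (R := k) (n := 2) (j := 1)
    · exact MvPolynomial.finSuccEquiv_X_succ (R := k) (n := 2) (j := 0)
  exact DFunLike.congr_fun h p

theorem aux_deg (k : Type*) [Field k] (ℓ : ℕ) :
    ((MvPolynomial.finSuccEquiv k 2) ((X 2 : MvPolynomial (Fin 3) k) ^ ℓ * ((X 1) ^ 2 + X 1)
        - ((X 0) ^ 2 + X 0))).degree = 2 := by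
  have h2 : ((2 : Fin 3)) = Fin.succ 1 := rfl
  have h1 : ((1 : Fin 3)) = Fin.succ 0 := rfl
  rw [map_sub, map_mul, map_pow, map_add, map_add, map_pow, map_pow, h1, h2,
    MvPolynomial.finSuccEquiv_X_succ, MvPolynomial.finSuccEquiv_X_succ, MvPolynomial.finSuccEquiv_X_zero]
  compute_degree!

theorem aux_dvd (k : Type*) [Field k] (ℓ : ℕ) (p : MvPolynomial (Fin 2) k)
    (h : ((X 2 : MvPolynomial (Fin 3) k) ^ ℓ * ((X 1) ^ 2 + X 1) - ((X 0) ^ 2 + X 0))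
      ∣ aeval (![X 2, X 1] : Fin 2 → MvPolynomial (Fin 3) k) p) : p = 0 := by
  obtain ⟨g, hg⟩ := h
  have := congrArg (MvPolynomial.finSuccEquiv k 2) hg
  rw [map_mul, aux_finSucc] at this
  rcases eq_or_ne (MvPolynomial.finSuccEquiv k 2 g) 0 with h0 | h0
  · rw [h0, mul_zero] at this
    have hp0 : aeval (![X 1, X 0] : Fin 2 → MvPolynomial (Fin 2) k) p = 0 := by
      exact_mod_cast Polynomial.C_eq_zero.mp this
    -- aeval ![X 1, X 0] is injective
    have hind : AlgebraicIndependent k (![X 1, X 0] : Fin 2 → MvPolynomial (Fin 2) k) := by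
      have := (MvPolynomial.algebraicIndependent_X (Fin 2) k).comp ![1, 0]
        (by intro a b hab; fin_cases a <;> fin_cases b <;> simp_all)
      convert this using 1
      funext i; fin_cases i <;> rfl
    have := algebraicIndependent_iff_injective_aeval.mp hind
    have : p = 0 := by
      apply this
      rw [hp0, map_zero]
    exact this
  · exfalso
    have hdeg := congrArg Polynomial.degree this
    rw [Polynomial.degree_mul, aux_deg] at hdeg
    have h2 : (Polynomial.C (aeval (![X 1, X 0] : Fin 2 → MvPolynomial (Fin 2) k) p)).degree ≤ 0 :=
      Polynomial.degree_C_le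
    rw [hdeg] at h2
    have hb := Polynomial.degree_eq_bot.not.mpr h0
    cases hd : ((MvPolynomial.finSuccEquiv k 2) g).degree with
    | bot => exact hb hd
    | coe n =>
        rw [hd] at h2
        have hthis : (((2+n:ℕ)) : WithBot ℕ) ≤ ((0:ℕ) : WithBot ℕ) := by
          push_cast
          convert h2 using 2
          rfl
        rw [Nat.cast_le] at hthis
        omega
section bridge
variable {k K : Type*} [Field k] [Field K] [Algebra k K] (z : K)

theorem aux_le : Algebra.adjoin k {z} ≤ (IntermediateField.adjoin k {z}).toSubalgebra :=
  Algebra.adjoin_le (Set.singleton_subset_iff.mpr (IntermediateField.mem_adjoin_simple_self k z))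

noncomputable def auxAlg : Algebra (Algebra.adjoin k {z}) (IntermediateField.adjoin k {z}) :=
  RingHom.toAlgebra
    { toFun := fun a => ⟨a.1, aux_le z a.2⟩
      map_one' := rfl
      map_mul' := fun _ _ => rfl
      map_zero' := rfl
      map_add' := fun _ _ => rfl }

theorem aux_bridge (x : K) :
    IsAlgebraic (Algebra.adjoin k {z}) x ↔ IsAlgebraic (IntermediateField.adjoin k {z}) x := by
  letI : Algebra (Algebra.adjoin k {z}) (IntermediateField.adjoin k {z}) := auxAlg z
  haveI htower : IsScalarTower (Algebra.adjoin k {z}) (IntermediateField.adjoin k {z}) K :=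
    IsScalarTower.of_algebraMap_eq' rfl
  haveI hinj : Function.Injective
      (algebraMap (Algebra.adjoin k {z}) (IntermediateField.adjoin k {z})) := by
    intro a b hab
    apply Subtype.ext
    exact congrArg (fun (w : IntermediateField.adjoin k {z}) => (w : K)) hab
  haveI : IsFractionRing (Algebra.adjoin k {z}) (IntermediateField.adjoin k {z}) := by
    constructor
    constructor
    · rintro ⟨y, hy⟩
      rw [mem_nonZeroDivisors_iff_ne_zero] at hy
      rw [isUnit_iff_ne_zero]
      intro h0
      exact hy (hinj (by rw [h0, map_zero]))
    · rintro f
      obtain ⟨r, s, hrs⟩ := (IntermediateField.mem_adjoin_simple_iff k (f : K)).mp f.2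
      rcases eq_or_ne (Polynomial.aeval z s) 0 with h0 | h0
      · refine ⟨⟨0, 1⟩, ?_⟩
        have : (f : K) = 0 := by rw [hrs, h0, div_zero]
        apply Subtype.ext
        simpa using (Subtype.ext this : f = (0 : IntermediateField.adjoin k {z}))
      · refine ⟨⟨⟨Polynomial.aeval z r, Polynomial.aeval_mem_adjoin_singleton k z⟩,
          ⟨⟨Polynomial.aeval z s, Polynomial.aeval_mem_adjoin_singleton k z⟩,
            mem_nonZeroDivisors_iff_ne_zero.mpr (by
              intro hh
              exact h0 (congrArg Subtype.val hh))⟩⟩, ?_⟩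
        apply Subtype.ext
        show (f : K) * Polynomial.aeval z s = Polynomial.aeval z r
        rw [hrs, div_mul_cancel₀ _ h0]
    · intro a b hab
      exact ⟨1, by simpa using hinj hab⟩
  constructor
  · intro h
    exact h.extendScalars hinj
  · intro h
    exact (IsFractionRing.isAlgebraic_iff (Algebra.adjoin k {z})
      (IntermediateField.adjoin k {z}) K).mpr h

end bridge

/-- Let ℓ ≥ 3 and k a field. If the quotient of k[y, y₁, z] by the relation
z^ℓ·(y₁² + y₁) = y² + y is a domain, then its fraction field is a purely transcendental
extension of k of transcendence degree 2, i.e. isomorphic as a k-algebra to the fraction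
field k(u, v) of the polynomial ring in two variables. -/
theorem stmt_3 (k : Type*) [Field k] (ℓ : ℕ) (hℓ : 3 ≤ ℓ)
    (Q : Type*) [CommRing Q] [IsDomain Q] [Algebra k Q]
    (e : Q ≃ₐ[k] (MvPolynomial (Fin 3) k ⧸
      Ideal.span {(X 2 : MvPolynomial (Fin 3) k) ^ ℓ * ((X 1) ^ 2 + X 1)
        - ((X 0) ^ 2 + X 0)}))
    (K L : Type*) [Field K] [Field L]
    [Algebra k K] [Algebra k L]
    [Algebra Q K] [IsScalarTower k Q K] [IsFractionRing Q K]
    [Algebra (MvPolynomial (Fin 2) k) L] [IsScalarTower k (MvPolynomial (Fin 2) k) L]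
    [IsFractionRing (MvPolynomial (Fin 2) k) L] :
    Nonempty (K ≃ₐ[k] L) := by
  classical
  set f : MvPolynomial (Fin 3) k :=
    X 2 ^ ℓ * (X 1 ^ 2 + X 1) - (X 0 ^ 2 + X 0) with hf
  let π : MvPolynomial (Fin 3) k →ₐ[k] Q :=
    (e.symm.toAlgHom).comp (Ideal.Quotient.mkₐ k (Ideal.span {f}))
  let ψ : MvPolynomial (Fin 3) k →ₐ[k] K := (IsScalarTower.toAlgHom k Q K).comp π
  have hπsurj : Function.Surjective π := by
    intro q
    obtain ⟨g, hg⟩ := Ideal.Quotient.mk_surjective (I := Ideal.span {f}) (e q)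
    refine ⟨g, ?_⟩
    rw [show π g = e.symm (Ideal.Quotient.mk (Ideal.span {f}) g) from rfl, hg,
      AlgEquiv.symm_apply_apply]
  have hφinj : Function.Injective (algebraMap Q K) := IsFractionRing.injective Q K
  have hψ : ∀ g : MvPolynomial (Fin 3) k, ψ g = algebraMap Q K (π g) := fun g => rfl
  have hker : ∀ g : MvPolynomial (Fin 3) k, ψ g = 0 ↔ f ∣ g := by
    intro g
    constructor
    · intro hg
      have h1 : π g = 0 := hφinj (by rw [← hψ, hg, map_zero])
      have h2 : Ideal.Quotient.mk (Ideal.span {f}) g = 0 := by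
        have h3 := congrArg e h1
        rw [map_zero, show π g = e.symm (Ideal.Quotient.mk (Ideal.span {f}) g) from rfl,
          AlgEquiv.apply_symm_apply] at h3
        exact h3
      rwa [Ideal.Quotient.eq_zero_iff_mem, Ideal.mem_span_singleton] at h2
    · rintro ⟨c, rfl⟩
      have h2 : Ideal.Quotient.mk (Ideal.span {f}) (f * c) = 0 := by
        rw [Ideal.Quotient.eq_zero_iff_mem]
        exact Ideal.mul_mem_right _ _ (Ideal.subset_span rfl)
      rw [hψ, show π (f * c) = e.symm (Ideal.Quotient.mk (Ideal.span {f}) (f * c)) from rfl,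
        h2, map_zero, map_zero]
  set Y := ψ (X 0) with hY
  set Y₁ := ψ (X 1) with hY₁def
  set Z := ψ (X 2) with hZ
  have hrel : Y ^ 2 + Y = Z ^ ℓ * (Y₁ ^ 2 + Y₁) := by
    have h0 : ψ f = 0 := (hker f).mpr dvd_rfl
    rw [hf] at h0
    simp only [map_sub, map_mul, map_pow, map_add] at h0
    rw [sub_eq_zero] at h0
    exact h0.symm
  have hY₁ : Y₁ ≠ 0 := by
    intro h0
    obtain ⟨c, hc⟩ := (hker _).mp h0
    have := congrArg (MvPolynomial.aeval (![0, -1, 0] : Fin 3 → k)) hc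
    simp [hf] at this
  have hW : Z ^ ℓ * Y₁ - Y ≠ 0 := by
    intro h0
    have h1 : ψ (X 2 ^ ℓ * X 1 - X 0) = 0 := by
      rw [map_sub, map_mul, map_pow]; exact h0
    obtain ⟨c, hc⟩ := (hker _).mp h1
    have := congrArg (MvPolynomial.aeval (![-1, -1, 0] : Fin 3 → k)) hc
    simp [hf, zero_pow (show ℓ ≠ 0 by omega)] at this
  set T := Y / Y₁ with hT
  have hTY : Y = T * Y₁ := (div_mul_cancel₀ Y hY₁).symm
  have hden : T ^ 2 - Z ^ ℓ ≠ 0 := by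
    have hd : T ^ 2 - Z ^ ℓ = (Z ^ ℓ * Y₁ - Y) / Y₁ ^ 2 := by
      rw [hT]
      field_simp
      linear_combination hrel
    rw [hd]
    exact div_ne_zero hW (pow_ne_zero _ hY₁)
  have hT2 : T * Y₁ = Y := div_mul_cancel₀ Y hY₁
  have hY₁eq : Y₁ = (Z ^ ℓ - T) / (T ^ 2 - Z ^ ℓ) := by
    rw [eq_div_iff hden]
    have h2 : (Y₁ * (T ^ 2 - Z ^ ℓ) - (Z ^ ℓ - T)) * Y₁ = 0 := by
      linear_combination (T * Y₁ + Y + 1) * hT2 + hrel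
    rcases mul_eq_zero.mp h2 with h3 | h3
    · exact sub_eq_zero.mp h3
    · exact absurd h3 hY₁
  -- algebraic independence of Z, Y₁
  have base : AlgebraicIndependent k (![X 2, X 1] : Fin 2 → MvPolynomial (Fin 3) k) := by
    have h := (MvPolynomial.algebraicIndependent_X (Fin 3) k).comp
      (![2, 1] : Fin 2 → Fin 3) (by decide)
    convert h using 1
    funext i; fin_cases i <;> rfl
  have hinjOn : Set.InjOn ψ (Algebra.adjoin k
      (Set.range (![X 2, X 1] : Fin 2 → MvPolynomial (Fin 3) k)) :
      Set (MvPolynomial (Fin 3) k)) := by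
    intro a ha b hb hab
    rw [SetLike.mem_coe, Algebra.adjoin_range_eq_range_aeval] at ha hb
    obtain ⟨p, rfl⟩ := ha
    obtain ⟨q, rfl⟩ := hb
    have h0 : ψ ((MvPolynomial.aeval (![X 2, X 1] : Fin 2 → MvPolynomial (Fin 3) k)) (p - q))
        = 0 := by
      rw [map_sub, map_sub, sub_eq_zero]
      exact hab
    have hpq : p - q = 0 := aux_dvd k ℓ (p - q) (by rw [← hf]; exact (hker _).mp h0)
    have hpq' : p = q := by rwa [sub_eq_zero] at hpq
    rw [hpq']
  have hZY₁ : AlgebraicIndependent k ![Z, Y₁] := by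
    have h := base.map (f := ψ) hinjOn
    convert h using 1
    funext i; fin_cases i <;> rfl
  have hZt : Transcendental k Z := by
    have := hZY₁.transcendental 0
    simpa using this
  have hz1 : AlgebraicIndependent k ![Z] := algebraicIndependent_iff_transcendental.mpr hZt
  have hrangeZ : Set.range (![Z] : Fin 1 → K) = {Z} := by
    simp
  have hY₁trans : Transcendental (Algebra.adjoin k {Z}) Y₁ := by
    have hopt : AlgebraicIndependent k (fun o : Option (Fin 1) => o.elim Y₁ ![Z]) := by
      have h := hZY₁.comp (fun o : Option (Fin 1) => o.elim 1 (fun _ => 0)) (by decide)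
      convert h using 1
      funext o
      cases o with
      | none => rfl
      | some a => fin_cases a; rfl
    have h := (hz1.option_iff_transcendental Y₁).mp hopt
    rwa [hrangeZ] at h
  have hTtrans : Transcendental (Algebra.adjoin k {Z}) T := by
    intro halg
    apply hY₁trans
    rw [aux_bridge] at halg ⊢
    have hTint : IsIntegral (IntermediateField.adjoin k {Z}) T := halg.isIntegral
    haveI halgadj := IntermediateField.isAlgebraic_adjoin_simple hTint
    have hZF : Z ∈ IntermediateField.adjoin k {Z} :=
      IntermediateField.mem_adjoin_simple_self k Z
    have hZFT : Z ∈ IntermediateField.adjoin (IntermediateField.adjoin k {Z}) {T} :=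
      (IntermediateField.adjoin (IntermediateField.adjoin k {Z}) {T}).algebraMap_mem
        ⟨Z, hZF⟩
    have hTFT : T ∈ IntermediateField.adjoin (IntermediateField.adjoin k {Z}) {T} :=
      IntermediateField.mem_adjoin_simple_self _ T
    have hY₁mem : Y₁ ∈ IntermediateField.adjoin (IntermediateField.adjoin k {Z}) {T} := by
      rw [hY₁eq]
      exact div_mem (sub_mem (pow_mem hZFT ℓ) hTFT)
        (sub_mem (pow_mem hTFT 2) (pow_mem hZFT ℓ))
    have := halgadj.isAlgebraic
      (⟨Y₁, hY₁mem⟩ : IntermediateField.adjoin (IntermediateField.adjoin k {Z}) {T})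
    exact IntermediateField.isAlgebraic_iff.mp this
  have hZT : AlgebraicIndependent k ![Z, T] := by
    have hopt := (hz1.option_iff_transcendental T).mpr (by rwa [hrangeZ])
    have h := hopt.comp (![some 0, none] : Fin 2 → Option (Fin 1)) (by decide)
    convert h using 1
    funext i; fin_cases i <;> rfl
  -- build the isomorphism
  have hAinj : Function.Injective (aeval ![Z, T] : MvPolynomial (Fin 2) k →ₐ[k] K) :=
    algebraicIndependent_iff_injective_aeval.mp hZT
  let i : L →ₐ[k] K := IsFractionRing.liftAlgHom (g := (aeval ![Z, T] :
    MvPolynomial (Fin 2) k →ₐ[k] K)) hAinj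
  have hrangeZT : Set.range (![Z, T] : Fin 2 → K) = {Z, T} := by
    simp [Set.range_subset_iff]
    exact Set.pair_comm T Z
  have hrange : i.fieldRange = IntermediateField.adjoin k {Z, T} :=
    IsFractionRing.liftAlgHom_fieldRange_eq_of_range_eq hAinj (s := {Z, T}) (by
      rw [← Algebra.adjoin_range_eq_range_aeval, hrangeZT])
  have htop : IntermediateField.adjoin k {Z, T} = ⊤ := by
    rw [eq_top_iff]
    intro x _
    set M := IntermediateField.adjoin k {Z, T} with hM
    have hZM : Z ∈ M := IntermediateField.subset_adjoin _ _ (Set.mem_insert _ _)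
    have hTM : T ∈ M := IntermediateField.subset_adjoin _ _
      (Set.mem_insert_of_mem _ rfl)
    have hY₁M : Y₁ ∈ M := by
      rw [hY₁eq]
      exact div_mem (sub_mem (pow_mem hZM ℓ) hTM) (sub_mem (pow_mem hTM 2) (pow_mem hZM ℓ))
    have hYM : Y ∈ M := by
      rw [hTY]; exact mul_mem hTM hY₁M
    have hψM : ∀ g : MvPolynomial (Fin 3) k, ψ g ∈ M := by
      intro g
      induction g using MvPolynomial.induction_on with
      | C a =>
          rw [show (MvPolynomial.C a : MvPolynomial (Fin 3) k) = algebraMap k _ a from rfl,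
            AlgHom.commutes]
          exact M.algebraMap_mem a
      | add p q hp hq => rw [map_add]; exact add_mem hp hq
      | mul_X p j hp =>
          rw [map_mul]
          refine mul_mem hp ?_
          fin_cases j
          · exact hYM
          · exact hY₁M
          · exact hZM
    obtain ⟨a, b, -, rfl⟩ := IsFractionRing.div_surjective (A := Q) x
    obtain ⟨ga, rfl⟩ := hπsurj a
    obtain ⟨gb, rfl⟩ := hπsurj b
    exact div_mem (hψM ga) (hψM gb)
  have hsurj : Function.Surjective i := by
    intro x
    have hx : x ∈ i.fieldRange := by
      rw [hrange, htop]
      trivial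
    obtain ⟨y, hy⟩ := hx
    exact ⟨y, hy⟩
  exact ⟨(AlgEquiv.ofBijective i ⟨RingHom.injective (i : L →+* K), hsurj⟩).symm⟩
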